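/- Let p be a nonzero polynomial over a field k of characteristic not 2 with p* = -(-1)^{deg p} · p. Then p(-1) = 0, and moreover the multiplicity of the root -1 in p is odd. -/

import Mathlib

open Polynomial

lemma reverse_X' {k : Type*} [Field k] : (X : k[X]).reverse = 1 := by
  rw [← mul_one (X : k[X]), reverse_X_mul, ← C_1, reverse_C]

lemma reverse_X_add_one {k : Type*} [Field k] : (X + 1 : k[X]).reverse = X + 1 := by
  rw [← C_1, reverse_add_C, reverse_X']
  simp
  ring

lemma reverse_pow_X_add_one {k : Type*} [Field k] (m : ℕ) :
    ((X + 1 : k[X]) ^ m).reverse = (X + 1) ^ m := by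
  induction m with
  | zero => rw [pow_zero, ← C_1, reverse_C]
  | succ m ih =>
    rw [pow_succ, reverse_mul_of_domain, ih, reverse_X_add_one]

lemma eval_neg_one_reverse {k : Type*} [Field k] (q : k[X]) :
    q.reverse.eval (-1) * (-1 : k) ^ q.natDegree = q.eval (-1) := by
  letI : Invertible (-1 : k) := ⟨-1, by ring, by ring⟩
  have h := eval₂_reverse_mul_pow (RingHom.id k) (-1 : k) q
  have hinv : (⅟(-1 : k)) = -1 := rfl
  have hinv2 : ((-1 : k))⁻¹ = -1 := by norm_num
  simpa only [hinv, eval] using h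

/-- If `p` is nonzero and `p* = -(-1)^(deg p) • p` over a field of characteristic
not 2, then `p(-1) = 0` and the multiplicity of the root `-1` in `p` is odd. -/
theorem eval_neg_one_and_odd_multiplicity {k : Type*} [Field k]
    (hchar : (2 : k) ≠ 0) (p : k[X]) (hp : p ≠ 0)
    (hrec : p.reverse = -((-1 : k[X]) ^ p.natDegree * p)) :
    p.eval (-1) = 0 ∧ Odd (p.rootMultiplicity (-1)) := by
  set m := p.rootMultiplicity (-1) with hm
  set q := p /ₘ (X - C (-1)) ^ m with hqdef
  have hfac : (X - C (-1 : k)) ^ m * q = p := p.pow_mul_divByMonic_rootMultiplicity_eq (-1)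
  have hq0 : q.eval (-1) ≠ 0 := eval_divByMonic_pow_rootMultiplicity_ne_zero (-1) hp
  have hqne : q ≠ 0 := fun h => hq0 (by simp [h])
  have hX1 : (X - C (-1 : k)) = X + 1 := by rw [map_neg, map_one]; ring
  rw [hX1] at hfac
  have hXm : ((X + 1 : k[X]) ^ m) ≠ 0 :=
    pow_ne_zero _ (fun h => by simpa using congrArg (eval 0) h)
  -- degrees
  have hdeg : p.natDegree = m + q.natDegree := by
    rw [← hfac, natDegree_mul hXm hqne]
    have h1 : (X + 1 : k[X]).natDegree = 1 := by
      rw [← C_1]; exact natDegree_X_add_C 1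
    simp [natDegree_pow, h1]
  -- reverse of factorization
  have hrev : p.reverse = (X + 1) ^ m * q.reverse := by
    rw [← hfac, reverse_mul_of_domain, reverse_pow_X_add_one]
  have hcancel : q.reverse = -((-1 : k[X]) ^ p.natDegree * q) := by
    have : (X + 1 : k[X]) ^ m * q.reverse = (X + 1) ^ m * (-((-1 : k[X]) ^ p.natDegree * q)) := by
      rw [← hrev, hrec, ← hfac]; ring
    exact mul_left_cancel₀ hXm this
  -- evaluate at -1
  have heval : q.reverse.eval (-1) = -((-1 : k) ^ p.natDegree * q.eval (-1)) := by
    rw [hcancel]; simp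
  have hkey := eval_neg_one_reverse q
  rw [heval] at hkey
  have hB2 : ((-1 : k)) ^ q.natDegree * (-1) ^ q.natDegree = 1 := by
    rw [← pow_add, ← two_mul, pow_mul]; norm_num
  have hsign : ((-1 : k)) ^ m = -1 := by
    have h2 : (-((-1 : k) ^ p.natDegree * (-1) ^ q.natDegree) - 1) * q.eval (-1) = 0 := by
      linear_combination hkey
    rcases mul_eq_zero.mp h2 with h | h
    · have hA : ((-1 : k)) ^ p.natDegree * (-1) ^ q.natDegree = -1 := by
        linear_combination -h
      calc ((-1 : k)) ^ m = (-1) ^ m * ((-1) ^ q.natDegree * (-1) ^ q.natDegree) := by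
            rw [hB2, mul_one]
        _ = ((-1 : k)) ^ p.natDegree * (-1) ^ q.natDegree := by
            rw [hdeg, pow_add]; ring
        _ = -1 := hA
    · exact absurd h hq0
  have hmodd : Odd m := by
    rcases Nat.even_or_odd m with he | ho
    · exfalso
      rw [he.neg_one_pow] at hsign
      exact hchar (by linear_combination hsign)
    · exact ho
  refine ⟨?_, hmodd⟩
  have hm1 : 1 ≤ m := hmodd.pos
  rw [← hfac]
  simp [eval_pow, zero_pow (by omega : m ≠ 0)]
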